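/- Let AC ⊆ {1,…,N}, let P be a finite family of pairs (s,t) of stabilizer sign sequences and R a finite family of sign sequences satisfying Requirements 1 and 2. Then for every deterministic local hidden-variable assignment a, b : {1,…,N} → {−1,+1}, the classical Bell value Σ_{(s,t)∈P} [ (a_{T_{s,t}} + s_{T_{s,t}} b_{T_{s,t}})·∏_{i∉AC} p_i(s_i) + (a_{T_{s,t}} + t_{T_{s,t}} b_{T_{s,t}})·∏_{i∉AC} p_i(t_i) ] + Σ_{u∈R} ∏_{i∉AC} p_i(u_i) is at most 2|P| + |R| (families counted with multiplicity). -/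

import Mathlib

/-!
STATEMENT 4: classical bound `2|P| + |R|` for the general Bell expression built
from a family `P` of pairs of sign sequences and a family `R` of sign
sequences satisfying Requirements 1 and 2 w.r.t. the set `AC`.
Families are lists, i.e. counted with multiplicity.
-/

/-- The deterministic local-hidden-variable value assigned to the symbol `k`:
`p_i(0) = 1`, `p_i(+1) = a_i`, `p_i(-1) = b_i`. -/
def clObs {N : ℕ} (a b : Fin N → ℤ) (i : Fin N) (k : ℤ) : ℤ :=
  if k = 1 then a i else if k = -1 then b i else 1

lemma clObs_pm {N : ℕ} (a b : Fin N → ℤ)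
    (ha : ∀ i, a i = 1 ∨ a i = -1) (hb : ∀ i, b i = 1 ∨ b i = -1)
    (i : Fin N) (k : ℤ) : clObs a b i k = 1 ∨ clObs a b i k = -1 := by
  unfold clObs
  split_ifs
  · exact ha i
  · exact hb i
  · exact Or.inl rfl

lemma prod_clObs_pm {N : ℕ} (a b : Fin N → ℤ)
    (ha : ∀ i, a i = 1 ∨ a i = -1) (hb : ∀ i, b i = 1 ∨ b i = -1)
    (S : Finset (Fin N)) (f : Fin N → ℤ) :
    (∏ i ∈ S, clObs a b i (f i)) = 1 ∨ (∏ i ∈ S, clObs a b i (f i)) = -1 := by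
  refine Finset.prod_induction _ (fun x => x = 1 ∨ x = -1) ?_ (Or.inl rfl) ?_
  · rintro x y (rfl | rfl) (rfl | rfl) <;> norm_num
  · intro i _
    exact clObs_pm a b ha hb i (f i)

theorem classical_general_bell_bound {N : ℕ}
    (AC : Finset (Fin N))
    (P : List ((Fin N → ℤ) × (Fin N → ℤ))) (R : List (Fin N → ℤ))
    (hsignP : ∀ p ∈ P, (∀ i, p.1 i = -1 ∨ p.1 i = 0 ∨ p.1 i = 1) ∧
                       (∀ i, p.2 i = -1 ∨ p.2 i = 0 ∨ p.2 i = 1))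
    (hsignR : ∀ u ∈ R, ∀ i, u i = -1 ∨ u i = 0 ∨ u i = 1)
    -- `Tsel p` is the unique anti-commuting position of the pair `p` inside `AC`
    (Tsel : (Fin N → ℤ) × (Fin N → ℤ) → Fin N)
    -- Requirement 1
    (hreq1 : ∀ p ∈ P, Tsel p ∈ AC ∧ p.1 (Tsel p) * p.2 (Tsel p) = -1 ∧
      ∀ i ∈ AC, i ≠ Tsel p → p.1 i = 0 ∧ p.2 i = 0)
    -- Requirement 2
    (hreq2 : ∀ u ∈ R, ∀ i ∈ AC, u i = 0)
    (a b : Fin N → ℤ)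
    (ha : ∀ i, a i = 1 ∨ a i = -1) (hb : ∀ i, b i = 1 ∨ b i = -1) :
    (P.map (fun p =>
        (a (Tsel p) + p.1 (Tsel p) * b (Tsel p)) *
            ∏ i ∈ Finset.univ \ AC, clObs a b i (p.1 i)
        + (a (Tsel p) + p.2 (Tsel p) * b (Tsel p)) *
            ∏ i ∈ Finset.univ \ AC, clObs a b i (p.2 i))).sum
      + (R.map (fun u => ∏ i ∈ Finset.univ \ AC, clObs a b i (u i))).sum
      ≤ 2 * P.length + R.length := by
  have hPsum : (P.map (fun p =>
        (a (Tsel p) + p.1 (Tsel p) * b (Tsel p)) *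
            ∏ i ∈ Finset.univ \ AC, clObs a b i (p.1 i)
        + (a (Tsel p) + p.2 (Tsel p) * b (Tsel p)) *
            ∏ i ∈ Finset.univ \ AC, clObs a b i (p.2 i))).sum ≤ 2 * P.length := by
    calc (P.map (fun p =>
        (a (Tsel p) + p.1 (Tsel p) * b (Tsel p)) *
            ∏ i ∈ Finset.univ \ AC, clObs a b i (p.1 i)
        + (a (Tsel p) + p.2 (Tsel p) * b (Tsel p)) *
            ∏ i ∈ Finset.univ \ AC, clObs a b i (p.2 i))).sum
        ≤ (P.map (fun p =>
            (a (Tsel p) + p.1 (Tsel p) * b (Tsel p)) *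
                ∏ i ∈ Finset.univ \ AC, clObs a b i (p.1 i)
            + (a (Tsel p) + p.2 (Tsel p) * b (Tsel p)) *
                ∏ i ∈ Finset.univ \ AC, clObs a b i (p.2 i))).length • (2 : ℤ) := by
          apply List.sum_le_card_nsmul
          intro x hx
          rw [List.mem_map] at hx
          obtain ⟨p, hpP, rfl⟩ := hx
          obtain ⟨hT, hst, -⟩ := hreq1 p hpP
          obtain ⟨hs, ht⟩ := hsignP p hpP
          have hs' := hs (Tsel p)
          have ht' := ht (Tsel p)
          have hA := ha (Tsel p)
          have hB := hb (Tsel p)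
          have hπ1 := prod_clObs_pm a b ha hb (Finset.univ \ AC) p.1
          have hπ2 := prod_clObs_pm a b ha hb (Finset.univ \ AC) p.2
          rcases hs' with e1 | e1 | e1 <;> rcases ht' with e2 | e2 | e2 <;>
            rw [e1, e2] at hst <;>
            rcases hA with e3 | e3 <;> rcases hB with e4 | e4 <;>
            rcases hπ1 with e5 | e5 <;> rcases hπ2 with e6 | e6 <;>
            rw [e1, e2, e3, e4, e5, e6] <;> revert hst <;> norm_num
        _ = 2 * P.length := by
          simp [smul_eq_mul, mul_comm]
  have hRsum : (R.map (fun u => ∏ i ∈ Finset.univ \ AC, clObs a b i (u i))).sum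
      ≤ (R.length : ℤ) := by
    calc (R.map (fun u => ∏ i ∈ Finset.univ \ AC, clObs a b i (u i))).sum
        ≤ (R.map (fun u => ∏ i ∈ Finset.univ \ AC, clObs a b i (u i))).length • (1 : ℤ) := by
          apply List.sum_le_card_nsmul
          intro x hx
          rw [List.mem_map] at hx
          obtain ⟨u, huR, rfl⟩ := hx
          rcases prod_clObs_pm a b ha hb (Finset.univ \ AC) u with h | h <;> rw [h] <;> norm_num
        _ = (R.length : ℤ) := by simp
  linarith
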